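/- Let Σ₁ := {a, b, c, f}, Σ₂ := {b, c, e}, L₁ := { cⁿ } ∪ { cⁿ·a·cᵐ } ∪ { cⁿ·f } ∪ { cⁿ·f·b·cᵐ } (n, m ≥ 0) over Σ₁, L₂ := { cⁿ } ∪ { cⁿ·b } ∪ { cⁿ·b·e·cᵐ } (n, m ≥ 0) over Σ₂, and L := L₁ ∥ L₂ over Σ := {a, b, c, e, f} with observable events Σₒ := {c, e}; let M denote the projection onto Σₒ and M₁ the projection of strings over Σ₁ onto {c}. Then for every n ≥ 1 the string f·b·cⁿ ∈ L₁ changes its observation in L: every w ∈ L with P₁(w) = f·b·cⁿ satisfies M(w) ≠ M₁(f·b·cⁿ) = cⁿ (in fact M(w) contains an occurrence of e). In contrast, for every n ≥ 0 the string a·cⁿ ∈ L₁ does not change its observation in L: there exists w ∈ L with P₁(w) = a·cⁿ and M(w) = M₁(a·cⁿ) = cⁿ. -/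
import Mathlib


/-- The events of the paper's example. -/
inductive Ev : Type
  | a | b | c | e | f
deriving DecidableEq

/-- Natural projection: erase all events not in `S`. -/
def proj (S : Finset Ev) (s : List Ev) : List Ev :=
  s.filter (· ∈ S)

/-- Parallel composition of two languages over alphabets `S1` and `S2`. -/
def par (S1 S2 : Finset Ev) (L1 L2 : Set (List Ev)) : Set (List Ev) :=
  {s | (∀ x ∈ s, x ∈ S1 ∪ S2) ∧ proj S1 s ∈ L1 ∧ proj S2 s ∈ L2}

/-- The language of automaton `G₁` over `Σ₁ = {a,b,c,f}`:
`c* ∪ c*·a·c* ∪ c*·f ∪ c*·f·b·c*`. -/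
def L1 : Set (List Ev) :=
  {w | ∃ n, w = List.replicate n Ev.c} ∪
  {w | ∃ n m, w = List.replicate n Ev.c ++ Ev.a :: List.replicate m Ev.c} ∪
  {w | ∃ n, w = List.replicate n Ev.c ++ [Ev.f]} ∪
  {w | ∃ n m, w = List.replicate n Ev.c ++ Ev.f :: Ev.b :: List.replicate m Ev.c}

/-- The language of automaton `G₂` over `Σ₂ = {b,c,e}`:
`c* ∪ c*·b ∪ c*·b·e·c*`. -/
def L2 : Set (List Ev) :=
  {w | ∃ n, w = List.replicate n Ev.c} ∪
  {w | ∃ n, w = List.replicate n Ev.c ++ [Ev.b]} ∪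
  {w | ∃ n m, w = List.replicate n Ev.c ++ Ev.b :: Ev.e :: List.replicate m Ev.c}

/-- The global language `L := L₁ ∥ L₂`. -/
def L : Set (List Ev) :=
  par {Ev.a, Ev.b, Ev.c, Ev.f} {Ev.b, Ev.c, Ev.e} L1 L2

lemma filt_rep (p : Ev → Bool) (h : p Ev.c = true) (n : ℕ) :
    List.filter p (List.replicate n Ev.c) = List.replicate n Ev.c :=
  List.filter_eq_self.mpr (by intro x hx; rw [List.eq_of_mem_replicate hx]; exact h)

lemma bc_not_L2 (n : ℕ) (hn : 1 ≤ n) :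
    Ev.b :: List.replicate n Ev.c ∉ L2 := by
  cases n with
  | zero => intro _; omega
  | succ n =>
    rintro ((⟨k, hk⟩ | ⟨k, hk⟩) | ⟨k, m, hk⟩) <;>
      cases k <;> simp [List.replicate_succ] at hk

/-- The module `G₂` changes the observation of the faulty strings `f·b·cⁿ`
(`n ≥ 1`) of `G₁` in the composition: every `w ∈ L` with `P₁(w) = f·b·cⁿ`
satisfies `M(w) ≠ M₁(f·b·cⁿ) = cⁿ` (in fact `M(w)` contains `e`); whereas no
string `a·cⁿ` changes its observation: some `w ∈ L` with `P₁(w) = a·cⁿ` has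
`M(w) = M₁(a·cⁿ) = cⁿ`. Here `M` projects onto `{c, e}` and `M₁` onto
`{c}`. -/
theorem stmt10 :
    (∀ n : ℕ, 1 ≤ n →
      proj {Ev.c} (Ev.f :: Ev.b :: List.replicate n Ev.c) =
        List.replicate n Ev.c ∧
      ∀ w ∈ L,
        proj {Ev.a, Ev.b, Ev.c, Ev.f} w =
            Ev.f :: Ev.b :: List.replicate n Ev.c →
          proj {Ev.c, Ev.e} w ≠ List.replicate n Ev.c ∧
          Ev.e ∈ proj {Ev.c, Ev.e} w) ∧
    (∀ n : ℕ,
      proj {Ev.c} (Ev.a :: List.replicate n Ev.c) = List.replicate n Ev.c ∧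
      ∃ w ∈ L,
        proj {Ev.a, Ev.b, Ev.c, Ev.f} w = Ev.a :: List.replicate n Ev.c ∧
        proj {Ev.c, Ev.e} w = List.replicate n Ev.c) := by
  have hrep : ∀ n, Ev.e ∉ List.replicate n Ev.c := by
    intro n h; have := List.eq_of_mem_replicate h; simp at this
  constructor
  · intro n hn
    refine ⟨by simp [proj, List.filter, filt_rep], ?_⟩
    rintro w ⟨hS, h1, h2⟩ hP1
    have he : Ev.e ∈ w := by
      by_contra he
      have hw : w = Ev.f :: Ev.b :: List.replicate n Ev.c := by
        rw [← hP1]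
        exact (List.filter_eq_self.mpr (by
          intro x hx
          have := hS x hx
          cases x <;> simp_all)).symm
      rw [hw] at h2
      have : proj {Ev.b, Ev.c, Ev.e} (Ev.f :: Ev.b :: List.replicate n Ev.c)
          = Ev.b :: List.replicate n Ev.c := by
        simp [proj, List.filter, filt_rep]
      rw [this] at h2
      exact bc_not_L2 n hn h2
    have heM : Ev.e ∈ proj {Ev.c, Ev.e} w := by
      simp [proj, List.mem_filter, he]
    exact ⟨fun h => hrep n (h ▸ heM), heM⟩
  · intro n
    refine ⟨by simp [proj, List.filter, filt_rep], ?_⟩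
    refine ⟨Ev.a :: List.replicate n Ev.c, ⟨?_, ?_, ?_⟩, ?_, ?_⟩
    · intro x hx
      rcases List.mem_cons.mp hx with h | h
      · subst h; simp
      · rw [List.eq_of_mem_replicate h]; simp
    · have : proj {Ev.a, Ev.b, Ev.c, Ev.f} (Ev.a :: List.replicate n Ev.c)
          = Ev.a :: List.replicate n Ev.c := by
        simp [proj, List.filter, filt_rep]
      rw [this]
      exact Or.inl (Or.inl (Or.inr ⟨0, n, by simp⟩))
    · have : proj {Ev.b, Ev.c, Ev.e} (Ev.a :: List.replicate n Ev.c)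
          = List.replicate n Ev.c := by
        simp [proj, List.filter, filt_rep]
      rw [this]
      exact Or.inl (Or.inl ⟨n, rfl⟩)
    · simp [proj, List.filter, filt_rep]
    · simp [proj, List.filter, filt_rep]
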